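/- Let ψ be a unit vector in H_A ⊗ H_B. Suppose X₁, X₂, Z₁, Z₂, W₁, W₂ are self-adjoint unitaries acting on H_A and X₃, X₄, Z₃, Z₄, W₃, W₄ self-adjoint unitaries acting on H_B, with [X₁,X₂]=[Z₁,Z₂]=[W₁,W₂]=[Z₃,X₄]=[X₃,Z₄]=[W₃,W₄]=0, satisfying the nine magic-square correlation conditions ⟨ψ|Z₁X₃|ψ⟩, ⟨ψ|Z₂X₄|ψ⟩, ⟨ψ|X₁Z₃|ψ⟩, ⟨ψ|X₂Z₄|ψ⟩, ⟨ψ|Z₁Z₂W₃|ψ⟩, ⟨ψ|X₁X₂W₄|ψ⟩, ⟨ψ|W₁X₃Z₄|ψ⟩, ⟨ψ|W₂X₄Z₃|ψ⟩ ≥ 1 − ε and −⟨ψ|W₁W₂W₃W₄|ψ⟩ ≥ 1 − ε. Then ‖Z₁X₁ψ + X₁Z₁ψ‖ ≤ 9√(2ε). -/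
import Mathlib


open scoped InnerProductSpace

section Aux

variable {H : Type*} [NormedAddCommGroup H] [InnerProductSpace ℂ H] [CompleteSpace H]

private lemma aux_isom (A : H →L[ℂ] H) (hA : ContinuousLinearMap.adjoint A = A)
    (hA1 : A * A = 1) (x : H) : ‖A x‖ = ‖x‖ := by
  have h : ⟪A x, A x⟫_ℂ = ⟪x, x⟫_ℂ := by
    calc ⟪A x, A x⟫_ℂ = ⟪(ContinuousLinearMap.adjoint A) x, A x⟫_ℂ := by rw [hA]
    _ = ⟪x, A (A x)⟫_ℂ := ContinuousLinearMap.adjoint_inner_left A (A x) x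
    _ = ⟪x, (A * A) x⟫_ℂ := rfl
    _ = ⟪x, x⟫_ℂ := by rw [hA1]; rfl
  rw [@norm_eq_sqrt_re_inner ℂ, @norm_eq_sqrt_re_inner ℂ _ _ _ _ x, h]

private lemma aux_move (A : H →L[ℂ] H) (hA : ContinuousLinearMap.adjoint A = A)
    (x y : H) : ⟪x, A y⟫_ℂ = ⟪A x, y⟫_ℂ := by
  conv_rhs => rw [← hA]
  rw [ContinuousLinearMap.adjoint_inner_left]

private lemma aux_key (u v : H) (hu : ‖u‖ = 1) (hv : ‖v‖ = 1) (ε : ℝ) (hε : 0 ≤ ε)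
    (h : 1 - ε ≤ (⟪u, v⟫_ℂ).re) : ‖u - v‖ ≤ Real.sqrt (2 * ε) := by
  have h2 : ‖u - v‖ ^ 2 ≤ 2 * ε := by
    have := @norm_sub_sq ℂ H _ _ _ u v
    simp only [RCLike.re_to_complex] at this
    rw [this, hu, hv]; nlinarith
  calc ‖u - v‖ = Real.sqrt (‖u - v‖ ^ 2) := (Real.sqrt_sq (norm_nonneg _)).symm
  _ ≤ Real.sqrt (2 * ε) := Real.sqrt_le_sqrt h2

end Aux

/-- Robust magic-square relation: under the nine near-perfect magic-square
correlation conditions (each within ε of its ideal value 1) for self-adjoint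
unitaries with the stated commutation relations (Alice-side operators, indices
1,2, commute with Bob-side operators, indices 3,4; this models the tensor
product structure), the bound ‖Z₁X₁ψ + X₁Z₁ψ‖ ≤ 9√(2ε) holds. -/
theorem stmt10 {H : Type*} [NormedAddCommGroup H] [InnerProductSpace ℂ H] [CompleteSpace H]
    (X₁ X₂ Z₁ Z₂ W₁ W₂ X₃ X₄ Z₃ Z₄ W₃ W₄ : H →L[ℂ] H)
    (hsa : ∀ P ∈ ([X₁, X₂, Z₁, Z₂, W₁, W₂, X₃, X₄, Z₃, Z₄, W₃, W₄] : List (H →L[ℂ] H)),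
      ContinuousLinearMap.adjoint P = P ∧ P * P = 1)
    (hAB : ∀ P ∈ ([X₁, X₂, Z₁, Z₂, W₁, W₂] : List (H →L[ℂ] H)),
      ∀ Q ∈ ([X₃, X₄, Z₃, Z₄, W₃, W₄] : List (H →L[ℂ] H)), Commute P Q)
    (hXX : Commute X₁ X₂) (hZZ : Commute Z₁ Z₂) (hWW : Commute W₁ W₂)
    (hZX : Commute Z₃ X₄) (hXZ : Commute X₃ Z₄) (hWW' : Commute W₃ W₄)
    (ψ : H) (hψ : ‖ψ‖ = 1) (ε : ℝ) (hε : 0 ≤ ε)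
    (h1 : (⟪ψ, (Z₁ * X₃) ψ⟫_ℂ).re ≥ 1 - ε)
    (h2 : (⟪ψ, (Z₂ * X₄) ψ⟫_ℂ).re ≥ 1 - ε)
    (h3 : (⟪ψ, (X₁ * Z₃) ψ⟫_ℂ).re ≥ 1 - ε)
    (h4 : (⟪ψ, (X₂ * Z₄) ψ⟫_ℂ).re ≥ 1 - ε)
    (h5 : (⟪ψ, (Z₁ * Z₂ * W₃) ψ⟫_ℂ).re ≥ 1 - ε)
    (h6 : (⟪ψ, (X₁ * X₂ * W₄) ψ⟫_ℂ).re ≥ 1 - ε)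
    (h7 : (⟪ψ, (W₁ * X₃ * Z₄) ψ⟫_ℂ).re ≥ 1 - ε)
    (h8 : (⟪ψ, (W₂ * X₄ * Z₃) ψ⟫_ℂ).re ≥ 1 - ε)
    (h9 : -(⟪ψ, (W₁ * W₂ * W₃ * W₄) ψ⟫_ℂ).re ≥ 1 - ε) :
    ‖Z₁ (X₁ ψ) + X₁ (Z₁ ψ)‖ ≤ 9 * Real.sqrt (2 * ε) := by
  set δ := Real.sqrt (2 * ε) with hδ
  -- self-adjointness and unitarity of each operator
  obtain ⟨aX₁, uX₁⟩ := hsa X₁ (by simp)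
  obtain ⟨aX₂, uX₂⟩ := hsa X₂ (by simp)
  obtain ⟨aZ₁, uZ₁⟩ := hsa Z₁ (by simp)
  obtain ⟨aZ₂, uZ₂⟩ := hsa Z₂ (by simp)
  obtain ⟨aW₁, uW₁⟩ := hsa W₁ (by simp)
  obtain ⟨aW₂, uW₂⟩ := hsa W₂ (by simp)
  obtain ⟨aX₃, uX₃⟩ := hsa X₃ (by simp)
  obtain ⟨aX₄, uX₄⟩ := hsa X₄ (by simp)
  obtain ⟨aZ₃, uZ₃⟩ := hsa Z₃ (by simp)
  obtain ⟨aZ₄, uZ₄⟩ := hsa Z₄ (by simp)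
  obtain ⟨aW₃, uW₃⟩ := hsa W₃ (by simp)
  obtain ⟨aW₄, uW₄⟩ := hsa W₄ (by simp)
  -- isometry facts
  have nX₁ := aux_isom X₁ aX₁ uX₁
  have nX₂ := aux_isom X₂ aX₂ uX₂
  have nZ₁ := aux_isom Z₁ aZ₁ uZ₁
  have nZ₂ := aux_isom Z₂ aZ₂ uZ₂
  have nW₁ := aux_isom W₁ aW₁ uW₁
  have nW₂ := aux_isom W₂ aW₂ uW₂
  have nX₃ := aux_isom X₃ aX₃ uX₃
  have nX₄ := aux_isom X₄ aX₄ uX₄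
  have nZ₃ := aux_isom Z₃ aZ₃ uZ₃
  have nZ₄ := aux_isom Z₄ aZ₄ uZ₄
  have nW₃ := aux_isom W₃ aW₃ uW₃
  have nW₄ := aux_isom W₄ aW₄ uW₄
  -- pointwise commutation between Alice-side and Bob-side operators
  have cc : ∀ (P Q : H →L[ℂ] H), Commute P Q → ∀ x, P (Q x) = Q (P x) := by
    intro P Q h x
    have := congrArg (fun T : H →L[ℂ] H => T x) h.eq
    simpa using this
  have cX₁X₄ := cc X₁ X₄ (hAB X₁ (by simp) X₄ (by simp))
  have cX₁Z₃ := cc X₁ Z₃ (hAB X₁ (by simp) Z₃ (by simp))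
  have cX₁W₃ := cc X₁ W₃ (hAB X₁ (by simp) W₃ (by simp))
  have cX₂X₃ := cc X₂ X₃ (hAB X₂ (by simp) X₃ (by simp))
  have cX₂X₄ := cc X₂ X₄ (hAB X₂ (by simp) X₄ (by simp))
  have cX₂Z₃ := cc X₂ Z₃ (hAB X₂ (by simp) Z₃ (by simp))
  have cX₂Z₄ := cc X₂ Z₄ (hAB X₂ (by simp) Z₄ (by simp))
  have cX₂W₃ := cc X₂ W₃ (hAB X₂ (by simp) W₃ (by simp))
  have cZ₁X₄ := cc Z₁ X₄ (hAB Z₁ (by simp) X₄ (by simp))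
  have cZ₁Z₃ := cc Z₁ Z₃ (hAB Z₁ (by simp) Z₃ (by simp))
  have cW₁X₄ := cc W₁ X₄ (hAB W₁ (by simp) X₄ (by simp))
  have cW₁Z₃ := cc W₁ Z₃ (hAB W₁ (by simp) Z₃ (by simp))
  have cXX := cc X₁ X₂ hXX
  have cZZ := cc Z₁ Z₂ hZZ
  have cWW := cc W₁ W₂ hWW
  -- unit norms of various vectors
  have mv := @aux_move H _ _ _
  -- the nine approximate relations, each giving distance ≤ δ
  have d1 : ‖Z₁ ψ - X₃ ψ‖ ≤ δ := by
    refine aux_key _ _ (by rw [nZ₁, hψ]) (by rw [nX₃, hψ]) ε hε ?_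
    have : ⟪ψ, (Z₁ * X₃) ψ⟫_ℂ = ⟪Z₁ ψ, X₃ ψ⟫_ℂ := mv Z₁ aZ₁ ψ (X₃ ψ)
    rw [← this]; exact h1
  have d2 : ‖Z₂ ψ - X₄ ψ‖ ≤ δ := by
    refine aux_key _ _ (by rw [nZ₂, hψ]) (by rw [nX₄, hψ]) ε hε ?_
    have : ⟪ψ, (Z₂ * X₄) ψ⟫_ℂ = ⟪Z₂ ψ, X₄ ψ⟫_ℂ := mv Z₂ aZ₂ ψ (X₄ ψ)
    rw [← this]; exact h2
  have d3 : ‖X₁ ψ - Z₃ ψ‖ ≤ δ := by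
    refine aux_key _ _ (by rw [nX₁, hψ]) (by rw [nZ₃, hψ]) ε hε ?_
    have : ⟪ψ, (X₁ * Z₃) ψ⟫_ℂ = ⟪X₁ ψ, Z₃ ψ⟫_ℂ := mv X₁ aX₁ ψ (Z₃ ψ)
    rw [← this]; exact h3
  have d4 : ‖X₂ ψ - Z₄ ψ‖ ≤ δ := by
    refine aux_key _ _ (by rw [nX₂, hψ]) (by rw [nZ₄, hψ]) ε hε ?_
    have : ⟪ψ, (X₂ * Z₄) ψ⟫_ℂ = ⟪X₂ ψ, Z₄ ψ⟫_ℂ := mv X₂ aX₂ ψ (Z₄ ψ)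
    rw [← this]; exact h4
  have d5 : ‖Z₁ (Z₂ ψ) - W₃ ψ‖ ≤ δ := by
    refine aux_key _ _ (by rw [nZ₁, nZ₂, hψ]) (by rw [nW₃, hψ]) ε hε ?_
    have e : ⟪ψ, (Z₁ * Z₂ * W₃) ψ⟫_ℂ = ⟪Z₁ (Z₂ ψ), W₃ ψ⟫_ℂ := by
      calc ⟪ψ, (Z₁ * Z₂ * W₃) ψ⟫_ℂ = ⟪ψ, Z₁ (Z₂ (W₃ ψ))⟫_ℂ := rfl
      _ = ⟪Z₁ ψ, Z₂ (W₃ ψ)⟫_ℂ := mv Z₁ aZ₁ ψ (Z₂ (W₃ ψ))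
      _ = ⟪Z₂ (Z₁ ψ), W₃ ψ⟫_ℂ := mv Z₂ aZ₂ (Z₁ ψ) (W₃ ψ)
      _ = ⟪Z₁ (Z₂ ψ), W₃ ψ⟫_ℂ := by rw [← cZZ]
    rw [← e]; exact h5
  have d6 : ‖X₁ (X₂ ψ) - W₄ ψ‖ ≤ δ := by
    refine aux_key _ _ (by rw [nX₁, nX₂, hψ]) (by rw [nW₄, hψ]) ε hε ?_
    have e : ⟪ψ, (X₁ * X₂ * W₄) ψ⟫_ℂ = ⟪X₁ (X₂ ψ), W₄ ψ⟫_ℂ := by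
      calc ⟪ψ, (X₁ * X₂ * W₄) ψ⟫_ℂ = ⟪ψ, X₁ (X₂ (W₄ ψ))⟫_ℂ := rfl
      _ = ⟪X₁ ψ, X₂ (W₄ ψ)⟫_ℂ := mv X₁ aX₁ ψ (X₂ (W₄ ψ))
      _ = ⟪X₂ (X₁ ψ), W₄ ψ⟫_ℂ := mv X₂ aX₂ (X₁ ψ) (W₄ ψ)
      _ = ⟪X₁ (X₂ ψ), W₄ ψ⟫_ℂ := by rw [← cXX]
    rw [← e]; exact h6
  have d7 : ‖W₁ ψ - X₃ (Z₄ ψ)‖ ≤ δ := by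
    refine aux_key _ _ (by rw [nW₁, hψ]) (by rw [nX₃, nZ₄, hψ]) ε hε ?_
    have e : ⟪ψ, (W₁ * X₃ * Z₄) ψ⟫_ℂ = ⟪W₁ ψ, X₃ (Z₄ ψ)⟫_ℂ := by
      calc ⟪ψ, (W₁ * X₃ * Z₄) ψ⟫_ℂ = ⟪ψ, W₁ (X₃ (Z₄ ψ))⟫_ℂ := rfl
      _ = ⟪W₁ ψ, X₃ (Z₄ ψ)⟫_ℂ := mv W₁ aW₁ ψ (X₃ (Z₄ ψ))
    rw [← e]; exact h7
  have d8 : ‖W₂ ψ - X₄ (Z₃ ψ)‖ ≤ δ := by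
    refine aux_key _ _ (by rw [nW₂, hψ]) (by rw [nX₄, nZ₃, hψ]) ε hε ?_
    have e : ⟪ψ, (W₂ * X₄ * Z₃) ψ⟫_ℂ = ⟪W₂ ψ, X₄ (Z₃ ψ)⟫_ℂ := by
      calc ⟪ψ, (W₂ * X₄ * Z₃) ψ⟫_ℂ = ⟪ψ, W₂ (X₄ (Z₃ ψ))⟫_ℂ := rfl
      _ = ⟪W₂ ψ, X₄ (Z₃ ψ)⟫_ℂ := mv W₂ aW₂ ψ (X₄ (Z₃ ψ))
    rw [← e]; exact h8
  have d9 : ‖W₁ (W₂ ψ) - -(W₃ (W₄ ψ))‖ ≤ δ := by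
    refine aux_key _ _ (by rw [nW₁, nW₂, hψ]) (by rw [norm_neg, nW₃, nW₄, hψ]) ε hε ?_
    have e : ⟪ψ, (W₁ * W₂ * W₃ * W₄) ψ⟫_ℂ = ⟪W₁ (W₂ ψ), W₃ (W₄ ψ)⟫_ℂ := by
      calc ⟪ψ, (W₁ * W₂ * W₃ * W₄) ψ⟫_ℂ = ⟪ψ, W₁ (W₂ (W₃ (W₄ ψ)))⟫_ℂ := rfl
      _ = ⟪W₁ ψ, W₂ (W₃ (W₄ ψ))⟫_ℂ := mv W₁ aW₁ ψ _
      _ = ⟪W₂ (W₁ ψ), W₃ (W₄ ψ)⟫_ℂ := mv W₂ aW₂ (W₁ ψ) _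
      _ = ⟪W₁ (W₂ ψ), W₃ (W₄ ψ)⟫_ℂ := by rw [← cWW]
    rw [inner_neg_right, Complex.neg_re, ← e]
    exact h9
  -- the chain of ten vectors
  set a0 : H := X₂ (Z₁ (X₄ (X₁ ψ))) with ha0
  set a1 : H := X₂ (Z₁ (X₄ (Z₃ ψ))) with ha1
  set a2 : H := X₂ (X₄ (Z₃ (X₃ ψ))) with ha2
  set a3 : H := X₄ (Z₃ (X₃ (Z₄ ψ))) with ha3
  set a4 : H := X₄ (Z₃ (W₁ ψ)) with ha4
  set a5 : H := W₁ (W₂ ψ) with ha5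
  set a6 : H := -(W₃ (W₄ ψ)) with ha6
  set a7 : H := -(X₁ (X₂ (W₃ ψ))) with ha7
  set a8 : H := -(X₁ (X₂ (Z₁ (Z₂ ψ)))) with ha8
  set a9 : H := -(X₁ (X₂ (Z₁ (X₄ ψ)))) with ha9
  have s01 : ‖a0 - a1‖ ≤ δ := by
    have e : a0 - a1 = X₂ (Z₁ (X₄ (X₁ ψ - Z₃ ψ))) := by
      rw [ha0, ha1, map_sub, map_sub, map_sub]
    rw [e, nX₂, nZ₁, nX₄]; exact d3
  have s12 : ‖a1 - a2‖ ≤ δ := by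
    have e1 : a1 = X₂ (X₄ (Z₃ (Z₁ ψ))) := by rw [ha1, cZ₁X₄, cZ₁Z₃]
    have e : a1 - a2 = X₂ (X₄ (Z₃ (Z₁ ψ - X₃ ψ))) := by
      rw [e1, ha2, map_sub, map_sub, map_sub]
    rw [e, nX₂, nX₄, nZ₃]; exact d1
  have s23 : ‖a2 - a3‖ ≤ δ := by
    have e2 : a2 = X₄ (Z₃ (X₃ (X₂ ψ))) := by rw [ha2, cX₂X₄, cX₂Z₃, cX₂X₃]
    have e : a2 - a3 = X₄ (Z₃ (X₃ (X₂ ψ - Z₄ ψ))) := by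
      rw [e2, ha3, map_sub, map_sub, map_sub]
    rw [e, nX₄, nZ₃, nX₃]; exact d4
  have s34 : ‖a3 - a4‖ ≤ δ := by
    have e : a3 - a4 = X₄ (Z₃ (X₃ (Z₄ ψ) - W₁ ψ)) := by
      rw [ha3, ha4, map_sub, map_sub]
    rw [e, nX₄, nZ₃, norm_sub_rev]; exact d7
  have s45 : ‖a4 - a5‖ ≤ δ := by
    have e4 : a4 = W₁ (X₄ (Z₃ ψ)) := by rw [ha4, ← cW₁Z₃, ← cW₁X₄]
    have e : a4 - a5 = W₁ (X₄ (Z₃ ψ) - W₂ ψ) := by rw [e4, ha5, map_sub]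
    rw [e, nW₁, norm_sub_rev]; exact d8
  have s56 : ‖a5 - a6‖ ≤ δ := d9
  have s67 : ‖a6 - a7‖ ≤ δ := by
    have e7 : a7 = -(W₃ (X₁ (X₂ ψ))) := by rw [ha7, cX₂W₃, cX₁W₃]
    have e : a6 - a7 = -(W₃ (W₄ ψ - X₁ (X₂ ψ))) := by
      rw [ha6, e7, map_sub]; abel
    rw [e, norm_neg, nW₃, norm_sub_rev]; exact d6
  have s78 : ‖a7 - a8‖ ≤ δ := by
    have e : a7 - a8 = -(X₁ (X₂ (W₃ ψ - Z₁ (Z₂ ψ)))) := by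
      rw [ha7, ha8, map_sub, map_sub]; abel
    rw [e, norm_neg, nX₁, nX₂, norm_sub_rev]; exact d5
  have s89 : ‖a8 - a9‖ ≤ δ := by
    have e : a8 - a9 = -(X₁ (X₂ (Z₁ (Z₂ ψ - X₄ ψ)))) := by
      rw [ha8, ha9, map_sub, map_sub, map_sub]; abel
    rw [e, norm_neg, nX₁, nX₂, nZ₁]; exact d2
  -- combine via the triangle inequality
  have chain : ‖a0 - a9‖ ≤ 9 * δ := by
    have t : ∀ x y z : H, ‖x - z‖ ≤ ‖x - y‖ + ‖y - z‖ := fun x y z => by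
      simpa [dist_eq_norm] using dist_triangle x y z
    calc ‖a0 - a9‖ ≤ ‖a0 - a1‖ + ‖a1 - a9‖ := t _ _ _
    _ ≤ ‖a0 - a1‖ + (‖a1 - a2‖ + ‖a2 - a9‖) := by linarith [t a1 a2 a9]
    _ ≤ ‖a0 - a1‖ + (‖a1 - a2‖ + (‖a2 - a3‖ + ‖a3 - a9‖)) := by linarith [t a2 a3 a9]
    _ ≤ ‖a0 - a1‖ + (‖a1 - a2‖ + (‖a2 - a3‖ + (‖a3 - a4‖ + ‖a4 - a9‖))) := by
        linarith [t a3 a4 a9]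
    _ ≤ ‖a0 - a1‖ + (‖a1 - a2‖ + (‖a2 - a3‖ + (‖a3 - a4‖ + (‖a4 - a5‖ + ‖a5 - a9‖)))) := by
        linarith [t a4 a5 a9]
    _ ≤ ‖a0 - a1‖ + (‖a1 - a2‖ + (‖a2 - a3‖ + (‖a3 - a4‖ + (‖a4 - a5‖ +
          (‖a5 - a6‖ + ‖a6 - a9‖))))) := by linarith [t a5 a6 a9]
    _ ≤ ‖a0 - a1‖ + (‖a1 - a2‖ + (‖a2 - a3‖ + (‖a3 - a4‖ + (‖a4 - a5‖ +
          (‖a5 - a6‖ + (‖a6 - a7‖ + ‖a7 - a9‖)))))) := by linarith [t a6 a7 a9]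
    _ ≤ ‖a0 - a1‖ + (‖a1 - a2‖ + (‖a2 - a3‖ + (‖a3 - a4‖ + (‖a4 - a5‖ +
          (‖a5 - a6‖ + (‖a6 - a7‖ + (‖a7 - a8‖ + ‖a8 - a9‖))))))) := by linarith [t a7 a8 a9]
    _ ≤ 9 * δ := by linarith
  -- identify a0 - a9 with X₂ (X₄ (Z₁ X₁ ψ + X₁ Z₁ ψ))
  have final : X₂ (X₄ (Z₁ (X₁ ψ) + X₁ (Z₁ ψ))) = a0 - a9 := by
    rw [ha0, ha9, sub_neg_eq_add, map_add, map_add]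
    congr 1
    · rw [cZ₁X₄]
    · calc X₂ (X₄ (X₁ (Z₁ ψ))) = X₂ (X₁ (X₄ (Z₁ ψ))) := by rw [cX₁X₄]
      _ = X₂ (X₁ (Z₁ (X₄ ψ))) := by rw [cZ₁X₄]
      _ = X₁ (X₂ (Z₁ (X₄ ψ))) := by rw [cXX]
  calc ‖Z₁ (X₁ ψ) + X₁ (Z₁ ψ)‖ = ‖X₂ (X₄ (Z₁ (X₁ ψ) + X₁ (Z₁ ψ)))‖ := by rw [nX₂, nX₄]
  _ = ‖a0 - a9‖ := by rw [final]
  _ ≤ 9 * δ := chain
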